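/- Let k ≥ 2 and let P be a permutation matrix of order m with P^k = P (equivalently P^{k−1} = I). For any 0-1 matrices X (r×m) and Y (m×s) such that X·Pᵀ·Y is a 0-1 matrix, the block matrix H = [[0, X, XPᵀY],[0, P, Y],[0, 0, 0]] (with square zero diagonal blocks of sizes r and s) satisfies H^k = H. -/

import Mathlib

open Matrix

/-- A 0-1 matrix over the integers. -/
def IsZeroOne {α β : Type*} (A : Matrix α β ℤ) : Prop :=
  ∀ i j, A i j = 0 ∨ A i j = 1

/-- A permutation matrix. -/
def IsPermMatrix {α : Type*} [DecidableEq α] (P : Matrix α α ℤ) : Prop :=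
  ∃ σ : Equiv.Perm α, ∀ i j, P i j = if j = σ i then 1 else 0

/-- The block matrix [[0, X, Z],[0, P, Y],[0, 0, 0]] with square zero diagonal blocks. -/
def blockH {α β γ : Type*} (X : Matrix α β ℤ) (P : Matrix β β ℤ)
    (Y : Matrix β γ ℤ) (Z : Matrix α γ ℤ) : Matrix (α ⊕ β ⊕ γ) (α ⊕ β ⊕ γ) ℤ :=
  Matrix.fromBlocks 0 (Matrix.fromCols X Z) 0 (Matrix.fromBlocks P Y 0 0)

lemma perm_mul_transpose {m : ℕ} (P : Matrix (Fin m) (Fin m) ℤ) (hP : IsPermMatrix P) :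
    P * Pᵀ = 1 := by
  obtain ⟨σ, hσ⟩ := hP
  ext i j
  simp only [Matrix.mul_apply, Matrix.transpose_apply, hσ, Matrix.one_apply]
  simp only [ite_mul, one_mul, zero_mul]
  rw [Finset.sum_ite_eq' Finset.univ (σ i)]
  simp [eq_comm, σ.injective.eq_iff]

lemma powD {m s : ℕ} (P : Matrix (Fin m) (Fin m) ℤ) (Y : Matrix (Fin m) (Fin s) ℤ) :
    ∀ n : ℕ, (Matrix.fromBlocks P Y (0 : Matrix (Fin s) (Fin m) ℤ)
        (0 : Matrix (Fin s) (Fin s) ℤ)) ^ (n + 1)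
      = Matrix.fromBlocks (P ^ (n + 1)) (P ^ n * Y) 0 0 := by
  intro n
  induction n with
  | zero => simp
  | succ n ih =>
    rw [pow_succ, ih, Matrix.fromBlocks_multiply]
    simp [pow_succ]

lemma powH {r m s : ℕ} (X : Matrix (Fin r) (Fin m) ℤ) (P : Matrix (Fin m) (Fin m) ℤ)
    (Y : Matrix (Fin m) (Fin s) ℤ) (Z : Matrix (Fin r) (Fin s) ℤ) :
    ∀ n : ℕ, (blockH X P Y Z) ^ (n + 1)
      = Matrix.fromBlocks 0
          (Matrix.fromCols X Z * ((Matrix.fromBlocks P Y 0 0) ^ n : Matrix (Fin m ⊕ Fin s) (Fin m ⊕ Fin s) ℤ)) 0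
          ((Matrix.fromBlocks P Y 0 0) ^ (n + 1)) := by
  intro n
  induction n with
  | zero => simp [blockH]
  | succ n ih =>
    rw [pow_succ, ih, blockH, Matrix.fromBlocks_multiply]
    simp [pow_succ, Matrix.mul_assoc]

theorem stmt6 {r m s k : ℕ} (hk : 2 ≤ k)
    (P : Matrix (Fin m) (Fin m) ℤ) (hP : IsPermMatrix P) (hPk : P ^ k = P)
    (X : Matrix (Fin r) (Fin m) ℤ) (Y : Matrix (Fin m) (Fin s) ℤ)
    (hX : IsZeroOne X) (hY : IsZeroOne Y) (hXPY : IsZeroOne (X * Pᵀ * Y)) :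
    (blockH X P Y (X * Pᵀ * Y)) ^ k = blockH X P Y (X * Pᵀ * Y) := by
  obtain ⟨n, rfl⟩ : ∃ n, k = n + 2 := ⟨k - 2, by omega⟩
  have hPPt : P * Pᵀ = 1 := perm_mul_transpose P hP
  have h1 : P ^ (n + 1) = 1 := by
    have : P ^ (n + 1) * P = P := by rw [← pow_succ]; exact hPk
    calc P ^ (n + 1) = P ^ (n + 1) * (P * Pᵀ) := by rw [hPPt, mul_one]
    _ = (P ^ (n + 1) * P) * Pᵀ := by rw [mul_assoc]
    _ = P * Pᵀ := by rw [this]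
    _ = 1 := hPPt
  have h2 : P ^ n = Pᵀ := by
    calc P ^ n = P ^ n * (P * Pᵀ) := by rw [hPPt, mul_one]
    _ = (P ^ n * P) * Pᵀ := by rw [mul_assoc]
    _ = P ^ (n + 1) * Pᵀ := by rw [pow_succ]
    _ = Pᵀ := by rw [h1, one_mul]
  rw [powH X P Y _ (n + 1), powD P Y n, powD P Y (n + 1), h1, h2, hPk]
  simp [blockH, Matrix.fromCols_mul_fromBlocks, Matrix.mul_assoc]
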